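/- Let E_1,…,E_n be pairwise disjoint measurable subsets of [0,1]^d of measure 1/n each, with ∪E_i of full measure, and suppose each E_i has diameter at most 2√(d+3)·n^{−1/d}. Let x_i be independent with x_i uniform on E_i, and let f : [0,1]^d → ℝ be Lipschitz with constant M. Then Var[(1/n)Σ_i f(x_i)] ≤ 4M²(d+3)·n^{−1−2/d}. -/

import Mathlib

open MeasureTheory ProbabilityTheory
open scoped ENNReal

private lemma var_sub_const {Ω : Type*} [MeasureSpace Ω] [IsProbabilityMeasure (ℙ : Measure Ω)]
    {g : Ω → ℝ} (hg : MemLp g 2 ℙ) (c : ℝ) :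
    variance (fun ω => g ω - c) ℙ = variance g ℙ := by
  have hint : (∫ ω, (g ω - c) ∂ℙ) = (∫ ω, g ω ∂ℙ) - c := by
    rw [integral_sub (hg.integrable one_le_two) (integrable_const c), integral_const]
    simp
  rw [variance, variance, evariance, evariance]
  congr 1
  refine lintegral_congr fun ω => ?_
  rw [hint, sub_sub_sub_cancel_right]

private lemma var_le_of_ae_bound {Ω : Type*} [MeasureSpace Ω]
    [IsProbabilityMeasure (ℙ : Measure Ω)] {g : Ω → ℝ}
    (hg : AEStronglyMeasurable g ℙ) {c r : ℝ} (hr : 0 ≤ r)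
    (hb : ∀ᵐ ω, |g ω - c| ≤ r) : variance g ℙ ≤ r ^ 2 := by
  have hmem : MemLp g 2 ℙ := by
    refine MemLp.of_bound hg (r + |c|) ?_
    filter_upwards [hb] with ω h
    rw [Real.norm_eq_abs]
    calc |g ω| = |(g ω - c) + c| := by ring_nf
      _ ≤ |g ω - c| + |c| := abs_add_le _ _
      _ ≤ r + |c| := by linarith
  have h2 : MemLp (fun ω => g ω - c) 2 ℙ := hmem.sub (memLp_const c)
  calc variance g ℙ = variance (fun ω => g ω - c) ℙ := (var_sub_const hmem c).symm
    _ ≤ ∫ ω, ((fun ω => g ω - c) ^ 2) ω ∂(ℙ : Measure Ω) := by exact variance_le_expectation_sq h2.1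
    _ ≤ r ^ 2 := by
        have hmono : (∫ ω, ((fun ω => g ω - c) ^ 2) ω ∂(ℙ : Measure Ω)) ≤ ∫ _, r ^ 2 ∂(ℙ : Measure Ω) := by
          refine integral_mono_ae h2.integrable_sq (integrable_const _) ?_
          filter_upwards [hb] with ω h
          simp only [Pi.pow_apply]
          calc (g ω - c) ^ 2 = |g ω - c| ^ 2 := (sq_abs _).symm
            _ ≤ r ^ 2 := pow_le_pow_left₀ (abs_nonneg _) h 2
        simpa using hmono

/-- Variance bound for the stratified estimator of a Lipschitz integrand along
cells of diameter at most `2√(d+3)·n^{-1/d}`. -/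
theorem stratified_variance_lipschitz (d n : ℕ) (hd : 1 ≤ d) (hn : 0 < n)
    {Ω : Type*} [MeasureSpace Ω] [IsProbabilityMeasure (ℙ : Measure Ω)]
    (E : Fin n → Set (EuclideanSpace ℝ (Fin d)))
    (hmeas : ∀ i, MeasurableSet (E i))
    (hsub : ∀ i, E i ⊆ {y : EuclideanSpace ℝ (Fin d) | ∀ j, y j ∈ Set.Icc (0 : ℝ) 1})
    (hdisj : Pairwise (Function.onFun Disjoint E))
    (hvol : ∀ i, volume (E i) = 1 / n)
    (hcover : volume ({y : EuclideanSpace ℝ (Fin d) | ∀ j, y j ∈ Set.Icc (0 : ℝ) 1}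
      \ ⋃ i, E i) = 0)
    (hdiam : ∀ i, Metric.diam (E i) ≤ 2 * Real.sqrt (d + 3) * (n : ℝ) ^ (-(1 : ℝ) / d))
    (x : Fin n → Ω → EuclideanSpace ℝ (Fin d))
    (hindep : iIndepFun x ℙ)
    (hlaw : ∀ i, Measure.map (x i) ℙ = (n : ℝ≥0∞) • volume.restrict (E i))
    (f : EuclideanSpace ℝ (Fin d) → ℝ) (hfm : Measurable f) (M : ℝ)
    (hLip : ∀ u ∈ {y : EuclideanSpace ℝ (Fin d) | ∀ j, y j ∈ Set.Icc (0 : ℝ) 1},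
      ∀ v ∈ {y : EuclideanSpace ℝ (Fin d) | ∀ j, y j ∈ Set.Icc (0 : ℝ) 1},
        |f u - f v| ≤ M * ‖u - v‖) :
    variance (fun ω => (1 / (n : ℝ)) * ∑ i, f (x i ω)) ℙ
      ≤ 4 * M ^ 2 * (d + 3) * (n : ℝ) ^ (-(1 : ℝ) - 2 / d) := by
  have hnR : (0 : ℝ) < n := Nat.cast_pos.mpr hn
  set S : Set (EuclideanSpace ℝ (Fin d)) :=
    {y : EuclideanSpace ℝ (Fin d) | ∀ j, y j ∈ Set.Icc (0 : ℝ) 1} with hS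
  -- M is nonnegative
  have hM : 0 ≤ M := by
    have h0 : (0 : EuclideanSpace ℝ (Fin d)) ∈ S := by
      intro j; exact ⟨le_refl 0, zero_le_one⟩
    have hv : (EuclideanSpace.single (⟨0, hd⟩ : Fin d) (1 : ℝ)) ∈ S := by
      intro j
      rcases eq_or_ne j ⟨0, hd⟩ with h | h
      · simp [h]
      · simp [EuclideanSpace.single_apply, h]
    have := hLip _ h0 _ hv
    have hnorm : ‖(0 : EuclideanSpace ℝ (Fin d)) -
        EuclideanSpace.single (⟨0, hd⟩ : Fin d) (1 : ℝ)‖ = 1 := by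
      rw [zero_sub, norm_neg, EuclideanSpace.norm_single]
      simp
    rw [hnorm, mul_one] at this
    exact le_trans (abs_nonneg _) this
  set r : ℝ := 2 * Real.sqrt (d + 3) * (n : ℝ) ^ (-(1 : ℝ) / d) with hr
  have hr0 : 0 ≤ r := by positivity
  -- each x i is a.e. measurable
  have hxmeas : ∀ i, AEMeasurable (x i) ℙ := by
    intro i
    by_contra h
    have h0 := Measure.map_of_not_aemeasurable h
    rw [hlaw i] at h0
    have : ((n : ℝ≥0∞) • volume.restrict (E i)) Set.univ = 0 := by rw [h0]; simp
    rw [Measure.smul_apply, Measure.restrict_apply MeasurableSet.univ, Set.univ_inter,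
      hvol i, smul_eq_mul, ENNReal.mul_div_cancel (by exact_mod_cast hn.ne')
        (ENNReal.natCast_ne_top n)] at this
    exact one_ne_zero this
  -- a.e., x i lands in E i
  have hxin : ∀ i, ∀ᵐ ω, x i ω ∈ E i := by
    intro i
    have hc : Measure.map (x i) ℙ (E i)ᶜ = 0 := by
      rw [hlaw i, Measure.smul_apply, Measure.restrict_apply (hmeas i).compl]
      simp
    rw [Measure.map_apply_of_aemeasurable (hxmeas i) (hmeas i).compl] at hc
    exact ae_iff.mpr hc
  -- E i is nonempty; pick base points
  have hne : ∀ i, (E i).Nonempty := by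
    intro i
    refine nonempty_of_measure_ne_zero (μ := volume) ?_
    rw [hvol i]
    simp [hn.ne']
  choose y₀ hy₀ using hne
  -- E i is bounded
  have hnorm_le : ∀ u ∈ S, ‖u‖ ≤ Real.sqrt d := by
    intro u hu
    rw [EuclideanSpace.norm_eq]
    refine Real.sqrt_le_sqrt ?_
    calc ∑ j, ‖u j‖ ^ 2 ≤ ∑ _j : Fin d, (1 : ℝ) := by
          refine Finset.sum_le_sum fun j _ => ?_
          have := hu j
          rw [Real.norm_eq_abs, sq_abs]
          nlinarith [this.1, this.2]
      _ = d := by simp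
  have hbdd : ∀ i, Bornology.IsBounded (E i) := by
    intro i
    rw [isBounded_iff_forall_norm_le]
    exact ⟨Real.sqrt d, fun u hu => hnorm_le u (hsub i hu)⟩
  -- the key a.e. bound per coordinate
  have hae : ∀ i, ∀ᵐ ω, |f (x i ω) - f (y₀ i)| ≤ M * r := by
    intro i
    filter_upwards [hxin i] with ω hω
    calc |f (x i ω) - f (y₀ i)| ≤ M * ‖x i ω - y₀ i‖ :=
          hLip _ (hsub i hω) _ (hsub i (hy₀ i))
      _ ≤ M * r := by
          refine mul_le_mul_of_nonneg_left ?_ hM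
          calc ‖x i ω - y₀ i‖ = dist (x i ω) (y₀ i) := (dist_eq_norm _ _).symm
            _ ≤ Metric.diam (E i) := Metric.dist_le_diam_of_mem (hbdd i) hω (hy₀ i)
            _ ≤ r := hdiam i
  have hgm : ∀ i, AEStronglyMeasurable (fun ω => f (x i ω)) ℙ :=
    fun i => (hfm.comp_aemeasurable (hxmeas i)).aestronglyMeasurable
  have hmem : ∀ i, MemLp (fun ω => f (x i ω)) 2 ℙ := by
    intro i
    refine MemLp.of_bound (hgm i) (M * r + |f (y₀ i)|) ?_
    filter_upwards [hae i] with ω h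
    rw [Real.norm_eq_abs]
    calc |f (x i ω)| = |(f (x i ω) - f (y₀ i)) + f (y₀ i)| := by ring_nf
      _ ≤ |f (x i ω) - f (y₀ i)| + |f (y₀ i)| := abs_add_le _ _
      _ ≤ M * r + |f (y₀ i)| := by linarith
  have hvar : ∀ i, variance (fun ω => f (x i ω)) ℙ ≤ (M * r) ^ 2 :=
    fun i => var_le_of_ae_bound (hgm i) (by positivity) (hae i)
  -- variance of the sum
  have hindep' : iIndepFun (fun i ω => f (x i ω)) ℙ :=
    hindep.comp _ (fun _ => hfm)
  have hsum : variance (∑ i, fun ω => f (x i ω)) ℙ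
      = ∑ i, variance (fun ω => f (x i ω)) ℙ := by
    refine IndepFun.variance_sum (fun i _ => hmem i) ?_
    intro i _ j _ hij
    exact hindep'.indepFun hij
  have hfun : (fun ω => (1 / (n : ℝ)) * ∑ i, f (x i ω))
      = fun ω => (1 / (n : ℝ)) * (∑ i, fun ω => f (x i ω)) ω := by
    funext ω; simp
  rw [hfun, variance_const_mul, hsum]
  have hsum_le : ∑ i, variance (fun ω => f (x i ω)) ℙ ≤ n * (M * r) ^ 2 := by
    calc ∑ i, variance (fun ω => f (x i ω)) ℙ ≤ ∑ _i : Fin n, (M * r) ^ 2 :=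
          Finset.sum_le_sum fun i _ => hvar i
      _ = n * (M * r) ^ 2 := by simp [mul_comm]
  calc (1 / (n : ℝ)) ^ 2 * ∑ i, variance (fun ω => f (x i ω)) ℙ
      ≤ (1 / (n : ℝ)) ^ 2 * (n * (M * r) ^ 2) := by
        refine mul_le_mul_of_nonneg_left hsum_le (by positivity)
    _ = 4 * M ^ 2 * (d + 3) * (n : ℝ) ^ (-(1 : ℝ) - 2 / d) := by
        have hsq : Real.sqrt (d + 3) ^ 2 = (d : ℝ) + 3 := Real.sq_sqrt (by positivity)
        have hpow : ((n : ℝ) ^ (-(1 : ℝ) / d)) ^ 2 = (n : ℝ) ^ (-(2 : ℝ) / d) := by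
          rw [← Real.rpow_natCast ((n : ℝ) ^ (-(1 : ℝ) / d)) 2, ← Real.rpow_mul hnR.le]
          norm_num
          ring_nf
        have hsplit : (n : ℝ) ^ (-(1 : ℝ) - 2 / d)
            = (n : ℝ) ^ (-(1 : ℝ)) * (n : ℝ) ^ (-(2 : ℝ) / d) := by
          rw [← Real.rpow_add hnR]
          ring_nf
        have hinv : (1 / (n : ℝ)) ^ 2 * n = (n : ℝ) ^ (-(1 : ℝ)) := by
          rw [Real.rpow_neg_one]
          field_simp
        calc (1 / (n : ℝ)) ^ 2 * (n * (M * r) ^ 2)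
            = ((1 / (n : ℝ)) ^ 2 * n) * (M * r) ^ 2 := by ring
          _ = (n : ℝ) ^ (-(1 : ℝ)) * (M ^ 2 * (4 * (Real.sqrt (d + 3) ^ 2)
                * ((n : ℝ) ^ (-(1 : ℝ) / d)) ^ 2)) := by rw [hinv]; ring
          _ = 4 * M ^ 2 * (d + 3) * (n : ℝ) ^ (-(1 : ℝ) - 2 / d) := by
              rw [hsq, hpow, hsplit]; ring
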